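/- Let F be a finite field with q elements, let K be an algebraic closure of F, let n ≥ 2, and let σ be a permutation of {1, …, n} that is a single n-cycle (a cycle whose support is all of {1, …, n}). Then for every monic polynomial f of degree n in F[x], Λ(f) equals the number of tuples (z_1, …, z_n) ∈ K^n such that f = ∏_{j=1}^n (x − z_j) (as polynomials over K) and z_j^q = z_{σ(j)} for all j. -/

import Mathlib

open scoped Classical

/-- The von Mangoldt function for polynomials over a field: `Λ f = deg g` if `f = g ^ k` for
some irreducible `g` and some `k ≥ 1`, and `Λ f = 0` otherwise. (For `f` a prime power, the
degree of the irreducible `g` is independent of the choice of witness.) -/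
noncomputable def polyVonMangoldt {F : Type*} [Field F] (f : Polynomial F) : ℕ :=
  if h : ∃ g : Polynomial F, Irreducible g ∧ ∃ k : ℕ, 1 ≤ k ∧ f = g ^ k
  then h.choose.natDegree else 0

open Polynomial


section Helpers

variable {F : Type*} [Field F] [Fintype F] {K : Type*} [Field K]
    [Algebra F K] [IsAlgClosure F K]

lemma pow_pow_of_dvd {M : Type*} [Monoid M] (α : M) {t d : ℕ} (h : α ^ t ^ d = α)
    {e : ℕ} (hd : d ∣ e) : α ^ t ^ e = α := by
  obtain ⟨c, rfl⟩ := hd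
  induction c with
  | zero => simp
  | succ c ih =>
    have h2 : t ^ (d * (c + 1)) = t ^ (d * c) * t ^ d := by
      rw [← pow_add]; ring_nf
    rw [h2, pow_mul, ih, h]

lemma pow_pow_add {M : Type*} [Monoid M] (α : M) (t a b : ℕ) :
    α ^ t ^ (a + b) = (α ^ t ^ a) ^ t ^ b := by
  rw [pow_add, pow_mul]

lemma exists_frobAlgHom (F : Type*) [Field F] [Fintype F] (K : Type*) [Field K] [Algebra F K]
    (e : ℕ) :
    ∃ Φ : K →ₐ[F] K, ∀ x : K, Φ x = x ^ Fintype.card F ^ e := by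
  obtain ⟨p, hchar⟩ := CharP.exists F
  have hinj := (algebraMap F K).injective
  haveI : CharP K p := charP_of_injective_algebraMap hinj p
  obtain ⟨s, hp, hcard⟩ := FiniteField.card F p
  haveI : Fact p.Prime := ⟨hp⟩
  have key : ∀ x : K, iterateFrobenius K p (s * e) x = x ^ Fintype.card F ^ e := by
    intro x
    rw [iterateFrobenius_def, hcard, ← pow_mul]
  refine ⟨{ toRingHom := iterateFrobenius K p (s * e), commutes' := ?_ }, key⟩
  intro a
  have : (algebraMap F K a) ^ Fintype.card F ^ e = algebraMap F K a := by
    rw [← map_pow, FiniteField.pow_card_pow]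
  simpa [key] using this

lemma aeval_pow_card (g : F[X]) (α : K) (h : Polynomial.aeval α g = 0) (m : ℕ) :
    Polynomial.aeval (α ^ Fintype.card F ^ m) g = 0 := by
  induction m with
  | zero => simpa using h
  | succ m ih =>
    obtain ⟨Φ, hΦ⟩ := exists_frobAlgHom F K 1
    have := Polynomial.aeval_algHom_apply Φ (α ^ Fintype.card F ^ m) g
    rw [ih, map_zero, hΦ, pow_one] at this
    rw [pow_pow_add α _ m 1, pow_one, this]

end Helpers


section Helpers2
set_option linter.unusedSectionVars false
variable {F : Type*} [Field F] [Fintype F] {K : Type*} [Field K]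
    [Algebra F K] [IsAlgClosure F K]

lemma minpoly_natDegree_le (α : K) {e : ℕ} (he : 1 ≤ e)
    (h : α ^ Fintype.card F ^ e = α) : (minpoly F α).natDegree ≤ e := by
  set q := Fintype.card F with hq
  have hq1 : 1 < q := Fintype.one_lt_card
  have hint : IsIntegral F α := Algebra.IsIntegral.isIntegral α
  set E := IntermediateField.adjoin F ({α} : Set K) with hE
  haveI : FiniteDimensional F E := IntermediateField.adjoin.finiteDimensional hint
  haveI : Finite E := Module.finite_of_finite F
  haveI : Fintype E := Fintype.ofFinite E
  have hd : Module.finrank F E = (minpoly F α).natDegree :=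
    IntermediateField.adjoin.finrank hint
  have hcardE : Fintype.card E = q ^ (minpoly F α).natDegree := by
    rw [Module.card_eq_pow_finrank (K := F) (V := E), hd]
  obtain ⟨Φ, hΦ⟩ := exists_frobAlgHom F K e
  have hfix : ∀ x : K, x ∈ E → x ^ q ^ e = x := by
    intro x hx
    have hsub : Algebra.adjoin F ({α} : Set K) ≤ AlgHom.equalizer Φ (AlgHom.id F K) := by
      apply Algebra.adjoin_le
      intro y hy
      rcases hy with rfl
      show Φ y = y
      rw [hΦ]; exact h
    have hx' : x ∈ Algebra.adjoin F ({α} : Set K) := by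
      rw [← IntermediateField.adjoin_simple_toSubalgebra_of_isAlgebraic hint.isAlgebraic]
      exact hx
    have := hsub hx'
    have : Φ x = x := this
    rwa [hΦ] at this
  -- count fixed points via roots of X^(q^e) - X
  set P : K[X] := X ^ q ^ e - X with hP
  have hPne : P ≠ 0 := FiniteField.X_pow_card_pow_sub_X_ne_zero K (by omega) hq1
  have hroots : ∀ x : K, x ∈ E → x ∈ P.roots.toFinset := by
    intro x hx
    rw [Multiset.mem_toFinset, Polynomial.mem_roots hPne]
    simp [hP, Polynomial.IsRoot, hfix x hx]
  have hcardle : Fintype.card E ≤ P.roots.toFinset.card := by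
    rw [← Finset.card_univ]
    exact Finset.card_le_card_of_injOn (fun x : E => (x : K))
      (fun a _ => hroots a a.2) (fun a _ b _ hab => Subtype.ext hab)
  have hcount : P.roots.toFinset.card ≤ q ^ e := by
    calc P.roots.toFinset.card ≤ Multiset.card P.roots := Multiset.toFinset_card_le _
    _ ≤ P.natDegree := Polynomial.card_roots' P
    _ = q ^ e := FiniteField.X_pow_card_pow_sub_X_natDegree_eq K (by omega) hq1
  have : q ^ (minpoly F α).natDegree ≤ q ^ e := by
    rw [← hcardE]; exact hcardle.trans hcount
  exact (Nat.pow_le_pow_iff_right hq1).mp this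

end Helpers2

section Helpers3
set_option linter.unusedSectionVars false
variable {F : Type*} [Field F] [Fintype F] {K : Type*} [Field K]
    [Algebra F K] [IsAlgClosure F K]

lemma pow_card_minpoly (α : K) : α ^ Fintype.card F ^ (minpoly F α).natDegree = α := by
  set q := Fintype.card F with hq
  have hint : IsIntegral F α := Algebra.IsIntegral.isIntegral α
  set E := IntermediateField.adjoin F ({α} : Set K) with hE
  haveI : FiniteDimensional F E := IntermediateField.adjoin.finiteDimensional hint
  haveI : Finite E := Module.finite_of_finite F
  haveI : Fintype E := Fintype.ofFinite E
  have hd : Module.finrank F E = (minpoly F α).natDegree :=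
    IntermediateField.adjoin.finrank hint
  have hcardE : Fintype.card E = q ^ (minpoly F α).natDegree := by
    rw [Module.card_eq_pow_finrank (K := F) (V := E), hd]
  have hmem : α ∈ E := IntermediateField.mem_adjoin_simple_self F α
  have := FiniteField.pow_card (⟨α, hmem⟩ : E)
  rw [hcardE] at this
  have := congrArg (fun x : E => (x : K)) this
  simpa using this

lemma minpoly_dvd_of_fixed (α : K) {e : ℕ} (h : α ^ Fintype.card F ^ e = α) :
    (minpoly F α).natDegree ∣ e := by
  set q := Fintype.card F with hq
  set d := (minpoly F α).natDegree with hd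
  have hint : IsIntegral F α := Algebra.IsIntegral.isIntegral α
  have hd1 : 0 < d := minpoly.natDegree_pos hint
  have hmod : α ^ q ^ (e % d) = α := by
    have h1 : α ^ q ^ (d * (e / d)) = α :=
      pow_pow_of_dvd α (pow_card_minpoly α) ⟨e / d, rfl⟩
    calc α ^ q ^ (e % d) = (α ^ q ^ (d * (e / d))) ^ q ^ (e % d) := by rw [h1]
    _ = α ^ q ^ (d * (e / d) + e % d) := (pow_pow_add α q _ _).symm
    _ = α ^ q ^ e := by rw [Nat.div_add_mod]
    _ = α := h
  rcases Nat.eq_zero_or_pos (e % d) with h0 | hpos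
  · exact Nat.dvd_of_mod_eq_zero h0
  · have := minpoly_natDegree_le α hpos hmod
    have := Nat.mod_lt e hd1
    omega

lemma pow_card_inj_on (α : K) {i j : ℕ} (hi : i < (minpoly F α).natDegree)
    (hj : j < (minpoly F α).natDegree)
    (hij : α ^ Fintype.card F ^ i = α ^ Fintype.card F ^ j) : i = j := by
  set q := Fintype.card F with hq
  set d := (minpoly F α).natDegree with hd
  have main : ∀ i j : ℕ, i < d → j < d → α ^ q ^ i = α ^ q ^ j → i ≤ j → i = j := by
    clear hi hj hij i j
    intro i j hi hj hij hle
    by_contra hne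
    have hlt : i < j := by omega
    have key : α ^ q ^ (d - (j - i)) = α := by
      have : α ^ q ^ (i + (d - j)) = α ^ q ^ (j + (d - j)) := by
        rw [pow_pow_add, pow_pow_add, hij]
      have h2 : j + (d - j) = d := by omega
      rw [h2, pow_card_minpoly α] at this
      have h3 : i + (d - j) = d - (j - i) := by omega
      rwa [h3] at this
    have := minpoly_natDegree_le α (by omega) key
    omega
  rcases le_total i j with hle | hle
  · exact main i j hi hj hij hle
  · exact (main j i hj hi hij.symm hle).symm

end Helpers3

section Helpers4
set_option linter.unusedSectionVars false
variable {F : Type*} [Field F] [Fintype F] {K : Type*} [Field K]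
    [Algebra F K] [IsAlgClosure F K]

lemma minpoly_roots_eq (α : K) :
    ((minpoly F α).map (algebraMap F K)).roots
      = (Multiset.range (minpoly F α).natDegree).map
          (fun m => α ^ Fintype.card F ^ m) := by
  haveI : IsAlgClosed K := IsAlgClosure.isAlgClosed F
  set q := Fintype.card F with hq
  have hint : IsIntegral F α := Algebra.IsIntegral.isIntegral α
  set g := minpoly F α with hg
  set d := g.natDegree with hd
  set gK := g.map (algebraMap F K) with hgK
  have hmonic : gK.Monic := (minpoly.monic hint).map _
  have hne : gK ≠ 0 := hmonic.ne_zero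
  have hdegK : gK.natDegree = d := Polynomial.natDegree_map _
  have hsplit : Polynomial.Splits gK :=
    IsAlgClosed.splits gK
  have hcard : Multiset.card gK.roots = d := by
    rw [Polynomial.splits_iff_card_roots.mp hsplit, hdegK]
  set t := (Multiset.range d).map (fun m => α ^ q ^ m) with ht
  have hnodup : t.Nodup := by
    refine Multiset.Nodup.map_on ?_ (Multiset.nodup_range d)
    intro i hi j hj hij
    exact pow_card_inj_on α (Multiset.mem_range.mp hi) (Multiset.mem_range.mp hj) hij
  have hsub : t ≤ gK.roots := by
    rw [Multiset.le_iff_subset hnodup]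
    intro x hx
    obtain ⟨m, hm, rfl⟩ := Multiset.mem_map.mp hx
    rw [Polynomial.mem_roots hne]
    show Polynomial.IsRoot gK _
    have : Polynomial.aeval (α ^ q ^ m) g = 0 :=
      aeval_pow_card g α (minpoly.aeval F α) m
    rwa [Polynomial.aeval_def, ← Polynomial.eval_map] at this
  have hcardt : Multiset.card t = d := by
    rw [ht, Multiset.card_map, Multiset.card_range]
  exact (Multiset.eq_of_le_of_card_le hsub (by rw [hcard, hcardt])).symm

lemma minpoly_map_prod (α : K) :
    (minpoly F α).map (algebraMap F K)
      = ∏ m ∈ Finset.range (minpoly F α).natDegree,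
          (X - C (α ^ Fintype.card F ^ m)) := by
  haveI : IsAlgClosed K := IsAlgClosure.isAlgClosed F
  have hint : IsIntegral F α := Algebra.IsIntegral.isIntegral α
  have hmonic : ((minpoly F α).map (algebraMap F K)).Monic := (minpoly.monic hint).map _
  have hsplit : Polynomial.Splits ((minpoly F α).map (algebraMap F K)) :=
    IsAlgClosed.splits _
  have h1 := hsplit.eq_prod_roots_of_monic hmonic
  rw [minpoly_roots_eq α, Multiset.map_map] at h1
  rw [h1]
  rfl

/-- product over a full period power -/
lemma prod_range_mul_eq_pow (α : K) (d k : ℕ) (h : α ^ Fintype.card F ^ d = α) :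
    ∏ m ∈ Finset.range (d * k), (X - C (α ^ Fintype.card F ^ m))
      = (∏ m ∈ Finset.range d, (X - C (α ^ Fintype.card F ^ m))) ^ k := by
  set q := Fintype.card F with hq
  induction k with
  | zero => simp
  | succ k ih =>
    have : d * (k + 1) = d * k + d := by ring
    rw [this, Finset.prod_range_add, ih, pow_succ]
    congr 1
    refine Finset.prod_congr rfl fun j _ => ?_
    congr 2
    have : α ^ q ^ (d * k + j) = (α ^ q ^ (d * k)) ^ q ^ j := pow_pow_add α q _ _
    rw [this, pow_pow_of_dvd α h ⟨k, rfl⟩]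

end Helpers4

/-- Let `F` be a finite field with `q` elements, `K` an algebraic closure
of `F`, `n ≥ 2`, and `σ` a single `n`-cycle in `S_n`. For every monic polynomial `f` of
degree `n` over `F`, `Λ f` equals the number of tuples `z ∈ K^n` with `f = ∏ (X - C (z j))`
over `K` and `z j ^ q = z (σ j)` for all `j`. -/
theorem polyVonMangoldt_eq_ncard (F : Type*) [Field F] [Fintype F] (K : Type*) [Field K]
    [Algebra F K] [IsAlgClosure F K] (n : ℕ) (hn : 2 ≤ n) (σ : Equiv.Perm (Fin n))
    (hσ : σ.IsCycle) (hsupp : σ.support = Finset.univ) (f : Polynomial F) (hf : f.Monic)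
    (hdeg : f.natDegree = n) :
    polyVonMangoldt f = Set.ncard {z : Fin n → K |
        Polynomial.map (algebraMap F K) f =
          ∏ j : Fin n, (Polynomial.X - Polynomial.C (z j)) ∧
        ∀ j, z j ^ Fintype.card F = z (σ j)} := by
  classical
  haveI : IsAlgClosed K := IsAlgClosure.isAlgClosed F
  set q := Fintype.card F with hq
  have hinj : Function.Injective (algebraMap F K) := (algebraMap F K).injective
  set S := {z : Fin n → K |
        Polynomial.map (algebraMap F K) f =
          ∏ j : Fin n, (Polynomial.X - Polynomial.C (z j)) ∧
        ∀ j, z j ^ q = z (σ j)} with hSdef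
  set j₀ : Fin n := ⟨0, by omega⟩ with hj₀
  have hfixall : ∀ j : Fin n, σ j ≠ j := by
    intro j
    rw [← Equiv.Perm.mem_support, hsupp]
    exact Finset.mem_univ j
  have horder : orderOf σ = n := by
    rw [hσ.orderOf, hsupp, Finset.card_univ, Fintype.card_fin]
  have hpowid : σ ^ n = 1 := by
    have := pow_orderOf_eq_one σ; rwa [horder] at this
  have haux : ∀ a b : ℕ, a ≤ b → (σ ^ a) j₀ = (σ ^ b) j₀ → n ∣ b - a := by
    intro a b hab h
    have h1 : (σ ^ (b - a)) ((σ ^ a) j₀) = (σ ^ a) j₀ := by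
      have : σ ^ (b - a) * σ ^ a = σ ^ b := by rw [← pow_add]; congr 1; omega
      rw [← Equiv.Perm.mul_apply, this, ← h]
    have h2 : σ ^ (b - a) = 1 := (hσ.pow_eq_one_iff' (hfixall _)).mpr h1
    have := orderOf_dvd_of_pow_eq_one h2
    rwa [horder] at this
  have alphpow : ∀ α : K, α ^ q ^ n = α → ∀ a b : ℕ,
      (σ ^ a) j₀ = (σ ^ b) j₀ → α ^ q ^ a = α ^ q ^ b := by
    intro α hα
    have main : ∀ a b : ℕ, a ≤ b → (σ ^ a) j₀ = (σ ^ b) j₀ → α ^ q ^ a = α ^ q ^ b := by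
      intro a b hab h
      have hdvd := haux a b hab h
      have : α ^ q ^ (a + (b - a)) = (α ^ q ^ a) ^ q ^ (b - a) := pow_pow_add α q a (b - a)
      have h2 : a + (b - a) = b := by omega
      rw [h2] at this
      rw [this]
      have h3 : (α ^ q ^ a) ^ q ^ (b - a) = ((α ^ q ^ (b - a)) ^ q ^ a) := by
        rw [← pow_pow_add, ← pow_pow_add, Nat.add_comm]
      rw [h3, pow_pow_of_dvd α hα hdvd]
    intro a b h
    rcases le_total a b with hab | hab
    · exact main a b hab h
    · exact (main b a hab h.symm).symm
  have hsurj : ∀ j : Fin n, ∃ m : ℕ, (σ ^ m) j₀ = j :=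
    fun j => hσ.exists_pow_eq (hfixall j₀) (hfixall j)
  choose mdx hmdx using hsurj
  have hiter : ∀ z : Fin n → K, (∀ j, z j ^ q = z (σ j)) →
      ∀ (m : ℕ) (j : Fin n), z ((σ ^ m) j) = z j ^ q ^ m := by
    intro z hz2 m
    induction m with
    | zero => intro j; simp
    | succ m ih =>
      intro j
      have h1 : (σ ^ (m + 1)) j = σ ((σ ^ m) j) := by
        rw [pow_succ']; rfl
      rw [h1, ← hz2, ih j, ← pow_mul, ← pow_succ]
  have prodbij : ∀ w : Fin n → K,
      ∏ j : Fin n, (Polynomial.X - Polynomial.C (w j)) =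
        ∏ m ∈ Finset.range n, (Polynomial.X - Polynomial.C (w ((σ ^ m) j₀))) := by
    intro w
    refine (Finset.prod_bij (fun m _ => (σ ^ m) j₀) (fun a _ => Finset.mem_univ _)
      ?_ ?_ ?_).symm
    · intro a ha b hb hab
      simp only [Finset.mem_range] at ha hb
      rcases le_total a b with h | h
      · have hd := haux a b h hab
        have : b - a = 0 := by
          by_contra h0
          have := Nat.le_of_dvd (by omega) hd
          omega
        omega
      · have hd := haux b a h hab.symm
        have : a - b = 0 := by
          by_contra h0
          have := Nat.le_of_dvd (by omega) hd
          omega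
        omega
    · intro j _
      refine ⟨mdx j % n, Finset.mem_range.mpr (Nat.mod_lt _ (by omega)), ?_⟩
      have h5 : σ ^ (mdx j % n) = σ ^ mdx j := by
        have := pow_mod_orderOf σ (mdx j); rwa [horder] at this
      show (σ ^ (mdx j % n)) j₀ = j
      rw [h5, hmdx j]
    · intro a _; rfl
  by_cases hprime : ∃ g : Polynomial F, Irreducible g ∧ ∃ k : ℕ, 1 ≤ k ∧ f = g ^ k
  · rw [polyVonMangoldt, dif_pos hprime]
    set g₀ := hprime.choose with hg₀def
    obtain ⟨hirr0, k, hk1, hfk0⟩ := hprime.choose_spec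
    set c := g₀.leadingCoeff with hcdef
    have hc0 : c ≠ 0 := Polynomial.leadingCoeff_ne_zero.mpr hirr0.ne_zero
    set g : Polynomial F := Polynomial.C c⁻¹ * g₀ with hgdef
    have hgmonic : g.Monic := by
      rw [Polynomial.Monic, hgdef, Polynomial.leadingCoeff_mul, Polynomial.leadingCoeff_C]
      exact inv_mul_cancel₀ hc0
    have hunit : IsUnit (Polynomial.C c⁻¹) :=
      Polynomial.isUnit_C.mpr ((inv_ne_zero hc0) |> IsUnit.mk0 _)
    have hassoc : Associated g₀ g := by
      rw [hgdef, mul_comm]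
      exact associated_mul_unit_right g₀ _ hunit
    have hgirr : Irreducible g := hassoc.irreducible hirr0
    have hcpow : c ^ k = 1 := by
      have h1 := congrArg Polynomial.leadingCoeff hfk0
      rw [hf.leadingCoeff, Polynomial.leadingCoeff_pow] at h1
      exact h1.symm
    have hfk : f = g ^ k := by
      rw [hgdef, mul_pow, ← Polynomial.C_pow, inv_pow, hcpow, inv_one, Polynomial.C_1,
        one_mul, hfk0]
    set d := g.natDegree with hddef
    have hd0 : g₀.natDegree = d := by
      rw [hddef, hgdef, Polynomial.natDegree_C_mul (inv_ne_zero hc0)]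
    have hd1 : 0 < d := hgirr.natDegree_pos
    have hnkd : n = k * d := by
      rw [← hdeg, hfk, Polynomial.natDegree_pow]
    have hk0 : k ≠ 0 := by omega
    have hddvdn : d ∣ n := ⟨k, by rw [hnkd, Nat.mul_comm]⟩
    -- minimal polynomial of any root of g is g
    have hgKne : Polynomial.map (algebraMap F K) g ≠ 0 :=
      (hgmonic.map (algebraMap F K)).ne_zero
    have hminβ : ∀ β : K, (Polynomial.map (algebraMap F K) g).IsRoot β → minpoly F β = g := by
      intro β hβ
      refine (minpoly.eq_of_irreducible_of_monic hgirr ?_ hgmonic).symm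
      rw [Polynomial.aeval_def, ← Polynomial.eval_map]
      exact hβ
    set R := (Polynomial.map (algebraMap F K) g).roots.toFinset with hRdef
    have hmemR : ∀ β : K, β ∈ R ↔ (Polynomial.map (algebraMap F K) g).IsRoot β := by
      intro β
      rw [hRdef, Multiset.mem_toFinset, Polynomial.mem_roots hgKne]
    have hβd : ∀ β ∈ R, β ^ q ^ d = β := by
      intro β hβ
      have h1 := pow_card_minpoly (F := F) β
      rwa [hminβ β ((hmemR β).mp hβ)] at h1
    have hβn : ∀ β ∈ R, β ^ q ^ n = β := by
      intro β hβ
      exact pow_pow_of_dvd β (hβd β hβ) hddvdn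
    -- cardinality of R
    have hRcard : R.card = d := by
      obtain ⟨α, hα⟩ := IsAlgClosed.exists_root (Polynomial.map (algebraMap F K) g)
        (by
          rw [Polynomial.degree_map]
          intro hcon
          have := Polynomial.natDegree_eq_zero_iff_degree_le_zero.mpr (le_of_eq hcon)
          omega)
      have hmin : minpoly F α = g := hminβ α hα
      have hroots : (Polynomial.map (algebraMap F K) g).roots
          = (Multiset.range d).map (fun m => α ^ q ^ m) := by
        have := minpoly_roots_eq (F := F) α
        rwa [hmin] at this
      rw [hRdef, hroots]
      have hnodup : ((Multiset.range d).map (fun m => α ^ q ^ m)).Nodup := by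
        refine Multiset.Nodup.map_on ?_ (Multiset.nodup_range d)
        intro i hi j hj hij
        refine pow_card_inj_on (F := F) α ?_ ?_ hij <;>
          rw [hmin] <;> [exact Multiset.mem_range.mp hi; exact Multiset.mem_range.mp hj]
      rw [Multiset.toFinset_card_of_nodup hnodup, Multiset.card_map, Multiset.card_range]
    -- the tuple attached to a root
    set tupleOf : K → (Fin n → K) := fun β j => β ^ q ^ (mdx j) with htupdef
    have htupj₀ : ∀ β : K, β ^ q ^ n = β → tupleOf β j₀ = β := by
      intro β hβ
      have := alphpow β hβ (mdx j₀) 0 (by rw [hmdx j₀, pow_zero]; rfl)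
      simpa using this
    have htupS : ∀ β ∈ R, tupleOf β ∈ S := by
      intro β hβR
      have hβ := hβn β hβR
      constructor
      · -- product condition
        have hstep : ∀ m : ℕ, tupleOf β ((σ ^ m) j₀) = β ^ q ^ m := by
          intro m
          exact alphpow β hβ (mdx ((σ ^ m) j₀)) m (hmdx _)
        rw [prodbij (tupleOf β)]
        have h1 : ∀ m ∈ Finset.range n,
            (Polynomial.X - Polynomial.C (tupleOf β ((σ ^ m) j₀)))
              = (Polynomial.X - Polynomial.C (β ^ q ^ m)) := by
          intro m _
          rw [hstep m]
        rw [Finset.prod_congr rfl h1]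
        have h3 := prod_range_mul_eq_pow β d k (hβd β hβR)
        have hdk : d * k = n := by rw [hnkd, Nat.mul_comm]
        rw [hdk] at h3
        rw [h3]
        have h4 := minpoly_map_prod (F := F) β
        rw [hminβ β ((hmemR β).mp hβR)] at h4
        rw [← h4, ← Polynomial.map_pow, ← hfk]
      · -- frobenius condition
        intro j
        show (β ^ q ^ mdx j) ^ q = β ^ q ^ mdx (σ j)
        have h1 : (β ^ q ^ mdx j) ^ q = β ^ q ^ (mdx j + 1) := by
          rw [pow_pow_add β q (mdx j) 1, pow_one]
        rw [h1]
        refine alphpow β hβ (mdx j + 1) (mdx (σ j)) ?_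
        rw [hmdx (σ j)]
        have h6 : (σ ^ (mdx j + 1)) j₀ = σ ((σ ^ mdx j) j₀) := by
          rw [pow_succ']; rfl
        rw [h6, hmdx j]
    have hzchar : ∀ z ∈ S, z j₀ ∈ R ∧ z = tupleOf (z j₀) := by
      rintro z ⟨hz1, hz2⟩
      have hαn : z j₀ ^ q ^ n = z j₀ := by
        have := hiter z hz2 n j₀
        rw [hpowid] at this
        simpa using this.symm
      constructor
      · rw [hmemR]
        have hev : Polynomial.eval (z j₀) (Polynomial.map (algebraMap F K) f) = 0 := by
          rw [hz1, Polynomial.eval_prod]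
          refine Finset.prod_eq_zero (Finset.mem_univ j₀) ?_
          simp
        rw [hfk, Polynomial.map_pow, Polynomial.eval_pow] at hev
        exact pow_eq_zero_iff hk0 |>.mp hev
      · funext j
        have h1 : z j = z ((σ ^ mdx j) j₀) := by rw [hmdx j]
        rw [h1, hiter z hz2 (mdx j) j₀]
    have hSim : S = tupleOf '' (R : Set K) := by
      apply Set.Subset.antisymm
      · intro z hz
        exact ⟨z j₀, (hzchar z hz).1, ((hzchar z hz).2).symm⟩
      · rintro _ ⟨β, hβ, rfl⟩
        exact htupS β hβ
    have hinjOn : Set.InjOn tupleOf (R : Set K) := by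
      intro β hβ β' hβ' h
      have h1 := htupj₀ β (hβn β hβ)
      have h2 := htupj₀ β' (hβn β' hβ')
      rw [← h1, ← h2, h]
    rw [hSim, Set.ncard_image_of_injOn hinjOn, Set.ncard_coe_finset, hRcard, hd0]
  · rw [polyVonMangoldt, dif_neg hprime]
    suffices hS : S = ∅ by rw [hS, Set.ncard_empty]
    rw [Set.eq_empty_iff_forall_notMem]
    rintro z ⟨hz1, hz2⟩
    set α := z j₀ with hα
    have hαn : α ^ q ^ n = α := by
      have := hiter z hz2 n j₀
      rw [hpowid] at this
      simpa using this.symm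
    have hint : IsIntegral F α := Algebra.IsIntegral.isIntegral α
    set d := (minpoly F α).natDegree with hd
    have hd1 : 0 < d := minpoly.natDegree_pos hint
    have hdn : d ∣ n := minpoly_dvd_of_fixed α hαn
    have hdlen : d ≤ n := Nat.le_of_dvd (by omega) hdn
    have hmap : Polynomial.map (algebraMap F K) f =
        Polynomial.map (algebraMap F K) ((minpoly F α) ^ (n / d)) := by
      rw [hz1, prodbij z, Polynomial.map_pow, minpoly_map_prod α]
      have h1 : ∀ m ∈ Finset.range n,
          (Polynomial.X - Polynomial.C (z ((σ ^ m) j₀))) =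
          (Polynomial.X - Polynomial.C (α ^ q ^ m)) := by
        intro m _
        rw [hiter z hz2 m j₀]
      rw [Finset.prod_congr rfl h1]
      have h3 := prod_range_mul_eq_pow α d (n / d) (pow_card_minpoly α)
      rw [Nat.mul_div_cancel' hdn] at h3
      exact h3
    have hfeq : f = (minpoly F α) ^ (n / d) :=
      Polynomial.map_injective _ hinj hmap
    exact hprime ⟨minpoly F α, minpoly.irreducible hint, n / d,
      (Nat.one_le_div_iff hd1).mpr hdlen, hfeq⟩
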